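/- arXiv:1901.08460 — 5 statements merged into one kernel-verified Lean document; each statement's English description precedes it below -/
import Mathlib

section
/- Consider the sequence recursion underlying the convergence of the decentralized Frank-Wolfe algorithm (Theorem 1). Let K ≥ 1 be an integer and C ≥ 0 a real constant. Let p : ℕ → ℝ satisfy p(0) ≥ 0 and, for all t ≥ 0, p(t+1) ≤ (1 − γ_t/K)·p(t) + γ_t²·C/(2K), where γ_t = 2K/(t + 2K). Then for every ε > 0 and every integer t ≥ 6K(C + p(0))/ε, one has p(t) ≤ ε. (In the paper, p(t) is the expected sub-optimality gap E[f(α^(t)) − f(α*)] of the decentralized Frank-Wolfe iterates and C = C⊗_f is the global product curvature constant, so the algorithm takes at most 6K(C⊗_f + p(0))/ε iterations to reach expected sub-optimality ε.) -/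
/-- Convergence of the decentralized Frank-Wolfe recursion (Theorem 1).
If `p` satisfies `p (t+1) ≤ (1 - γ_t/K) p t + γ_t² C / (2K)` with `γ_t = 2K/(t+2K)`,
then `p t ≤ ε` for every `t ≥ 6K(C + p 0)/ε`. -/
theorem decentralized_frank_wolfe_iterations
    (K : ℕ) (hK : 1 ≤ K) (C : ℝ) (hC : 0 ≤ C)
    (p : ℕ → ℝ) (hp0 : 0 ≤ p 0)
    (γ : ℕ → ℝ) (hγ : ∀ t : ℕ, γ t = 2 * K / ((t : ℝ) + 2 * K))
    (hrec : ∀ t : ℕ, p (t + 1) ≤ (1 - γ t / K) * p t + (γ t) ^ 2 * C / (2 * K))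
    (ε : ℝ) (hε : 0 < ε)
    (t : ℕ) (ht : 6 * K * (C + p 0) / ε ≤ (t : ℝ)) :
    p t ≤ ε := by
  have hKR : (1 : ℝ) ≤ (K : ℝ) := by exact_mod_cast hK
  have hK0 : (0 : ℝ) < (K : ℝ) := by linarith
  set B : ℝ := 2 * K * (C + p 0) with hB
  have hBnn : 0 ≤ B := by positivity
  have key : ∀ n : ℕ, p n ≤ B / ((n : ℝ) + 2 * K) := by
    intro n
    induction n with
    | zero =>
      simp only [Nat.cast_zero, zero_add]
      rw [le_div_iff₀ (by positivity)]
      nlinarith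
    | succ m ih =>
      have hs : (2 : ℝ) ≤ (m : ℝ) + 2 * K := by
        have := Nat.cast_nonneg (α := ℝ) m; linarith
      set s : ℝ := (m : ℝ) + 2 * K with hsdef
      have hs0 : 0 < s := by linarith
      have hrec' := hrec m
      rw [hγ m] at hrec'
      have h1 : (1 : ℝ) - (2 * K / s) / K = 1 - 2 / s := by
        field_simp
      rw [h1] at hrec'
      have hcoef : 0 ≤ 1 - 2 / s := by
        rw [sub_nonneg, div_le_one hs0]; exact hs
      have h2 : p (m + 1) ≤ (1 - 2 / s) * (B / s) + (2 * K / s) ^ 2 * C / (2 * K) := by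
        calc p (m + 1) ≤ (1 - 2 / s) * p m + (2 * K / s) ^ 2 * C / (2 * K) := hrec'
          _ ≤ (1 - 2 / s) * (B / s) + (2 * K / s) ^ 2 * C / (2 * K) := by
              gcongr
      have hcast : ((m + 1 : ℕ) : ℝ) + 2 * K = s + 1 := by
        push_cast; ring
      rw [hcast]
      refine h2.trans ?_
      have hterm : (2 * K / s) ^ 2 * C / (2 * K) = 2 * K * C / s ^ 2 := by
        field_simp
      rw [hterm]
      rw [le_div_iff₀ (by linarith : (0:ℝ) < s + 1)]
      have hexp : ((1 - 2 / s) * (B / s) + 2 * K * C / s ^ 2) * (s + 1)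
          = ((s - 2) * B + 2 * K * C) * (s + 1) / s ^ 2 := by
        field_simp
      rw [hexp, div_le_iff₀ (by positivity)]
      have h2KC : 2 * K * C ≤ B := by nlinarith
      nlinarith [sq_nonneg s, mul_pos hs0 hs0]
  have hkt := key t
  have hts : (0 : ℝ) < (t : ℝ) + 2 * K := by
    have := Nat.cast_nonneg (α := ℝ) t; linarith
  refine hkt.trans ?_
  rw [div_le_iff₀ hts]
  rw [div_le_iff₀ hε] at ht
  nlinarith
end

section
/- (Theorem 2, stated as a finite average over i.i.d. uniform block choices.) For any w⁰ ∈ ℝ^{K(K−1)/2} with w⁰ ≥ 0 and any integer T ≥ 1, averaging over all sequences (b_1,…,b_T) ∈ B^T of blocks and setting w^t = T_{b_t}(w^{t−1}) for t = 1,…,T, one has (1/|B|^T) · Σ_{(b_1,…,b_T) ∈ B^T} h(w^T) − h(w*) ≤ ρ^T · (h(w⁰) − h(w*)), where ρ = 1 − 2κσ/(K(K−1)·L_max). Equivalently, under i.i.d. uniform random block selection, the expected sub-optimality gap E[h(w^(T)) − h*] is cut by the factor ρ at every iteration. -/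
open scoped RealInnerProductSpace BigOperators

/-- Coordinates are indexed by unordered pairs of distinct elements of `[K]`,
represented as ordered pairs `(i,j)` with `i < j`; there are `K(K−1)/2` of them. -/
abbrev PairIdx (K : ℕ) := {q : Fin K × Fin K // q.1 < q.2}

/-- Weight vectors live in `ℝ^{K(K−1)/2}` with the Euclidean structure. -/
abbrev GVec (K : ℕ) := EuclideanSpace ℝ (PairIdx K)

/-- A block `b = (k, 𝒦)` with `k ∈ [K]`, `𝒦 ⊆ [K]\{k}`, `|𝒦| = κ`. -/
abbrev Blk (K κ : ℕ) := {b : Fin K × Finset (Fin K) // b.1 ∉ b.2 ∧ b.2.card = κ}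

/-- The coordinate `{i,j}` belongs to block `(k,𝒦)` iff it is of the form `{k,l}`, `l ∈ 𝒦`. -/
def inBlock {K κ : ℕ} (b : Blk K κ) (q : PairIdx K) : Prop :=
  (q.1.1 = b.1.1 ∧ q.1.2 ∈ b.1.2) ∨ (q.1.2 = b.1.1 ∧ q.1.1 ∈ b.1.2)

instance {K κ : ℕ} (b : Blk K κ) (q : PairIdx K) : Decidable (inBlock b q) := by
  unfold inBlock; infer_instance

/-- The block proximal-gradient update `T_b(w)`: on the coordinates of block `b` it equals
`max(0, [w]_b − (1/L_b)[∇h(w)]_b)`, and it agrees with `w` outside block `b`. -/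
noncomputable def blockProxUpdate {K κ : ℕ} (h : GVec K → ℝ) (L : Blk K κ → ℝ)
    (b : Blk K κ) (w : GVec K) : GVec K :=
  WithLp.toLp 2 (fun q => if inBlock b q then max 0 (w q - (1 / L b) * gradient h w q) else w q)

/-- `iterSeq h L bs w⁰` is the iterate `w^T` obtained from `w⁰` by applying the block
updates `T_{b_1}, …, T_{b_T}` in order. -/
noncomputable def iterSeq {K κ T : ℕ} (h : GVec K → ℝ) (L : Blk K κ → ℝ)
    (bs : Fin T → Blk K κ) (w0 : GVec K) : GVec K :=
  (List.ofFn bs).foldl (fun w b => blockProxUpdate h L b w) w0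

/-! ### Auxiliary lemmas -/

lemma quad_prox (Lb Lm g wq t : ℝ) (hL : 0 < Lb) (hLm : Lb ≤ Lm) (hwq : 0 ≤ wq)
    (ht : 0 ≤ wq + t) :
    (max 0 (wq - 1/Lb * g) - wq) * g + Lb/2 * (max 0 (wq - 1/Lb * g) - wq)^2
      ≤ t * g + Lm/2 * t^2 := by
  have hg : g = Lb * (1/Lb * g) := by field_simp
  set u := 1/Lb * g with hu
  rw [hg]
  rcases le_or_gt 0 (wq - u) with h0 | h0
  · rw [max_eq_right h0]
    nlinarith [mul_nonneg hL.le (sq_nonneg (t + u)), mul_le_mul_of_nonneg_right hLm (sq_nonneg t)]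
  · rw [max_eq_left h0.le]
    nlinarith [mul_nonneg ht (mul_nonneg hL.le (by linarith : (0:ℝ) ≤ u - wq)),
      mul_nonneg hL.le (mul_nonneg ht ht), mul_le_mul_of_nonneg_right hLm (sq_nonneg t)]

lemma card_blk (K κ : ℕ) : Fintype.card (Blk K κ) = K * (K-1).choose κ := by
  rw [← Finset.card_univ]
  have h1 : (Finset.univ : Finset (Blk K κ)).card
      = (Finset.univ.sigma fun k : Fin K => Finset.powersetCard κ (Finset.univ.erase k)).card := by
    refine Finset.card_bij' (fun b _ => (⟨b.1.1, b.1.2⟩ : Σ _ : Fin K, Finset (Fin K)))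
      (fun p hp => (⟨(p.1, p.2), ?_⟩ : Blk K κ)) ?_ ?_ ?_ ?_
    · rcases Finset.mem_sigma.mp hp with ⟨-, h2⟩
      rcases Finset.mem_powersetCard.mp h2 with ⟨hsub, hcard⟩
      exact ⟨fun hc => (Finset.mem_erase.mp (hsub hc)).1 rfl, hcard⟩
    · intro b _
      refine Finset.mem_sigma.mpr ⟨Finset.mem_univ _, Finset.mem_powersetCard.mpr ⟨?_, b.2.2⟩⟩
      exact Finset.subset_erase.mpr ⟨Finset.subset_univ _, b.2.1⟩
    · intro p hp; exact Finset.mem_univ _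
    · intro b _; rfl
    · intro p hp; rfl
  rw [h1, Finset.card_sigma]
  have key : ∀ k : Fin K, (Finset.powersetCard κ (Finset.univ.erase k)).card = (K-1).choose κ := by
    intro k
    rw [Finset.card_powersetCard, Finset.card_erase_of_mem (Finset.mem_univ k),
      Finset.card_univ, Fintype.card_fin]
  rw [Finset.sum_congr rfl (fun k _ => key k), Finset.sum_const, Finset.card_univ,
    Fintype.card_fin, smul_eq_mul]

lemma card_subsets_with_mem {α : Type*} [DecidableEq α] (s : Finset α) (a : α) (ha : a ∈ s)
    (k : ℕ) (hk : 1 ≤ k) :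
    ((s.powersetCard k).filter (fun t => a ∈ t)).card = (s.card - 1).choose (k - 1) := by
  rw [← Finset.card_erase_of_mem ha, ← Finset.card_powersetCard (k-1) (s.erase a)]
  apply Finset.card_nbij' (fun t => t.erase a) (fun t => insert a t)
  · intro t ht
    simp only [Finset.mem_coe, Finset.mem_filter, Finset.mem_powersetCard] at ht ⊢
    refine ⟨fun x hx => ?_, ?_⟩
    · rcases Finset.mem_erase.mp hx with ⟨hxa, hxt⟩
      exact Finset.mem_erase.mpr ⟨hxa, ht.1.1 hxt⟩
    · rw [Finset.card_erase_of_mem ht.2, ht.1.2]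
  · intro t ht
    simp only [Finset.mem_coe, Finset.mem_filter, Finset.mem_powersetCard] at ht ⊢
    have hat : a ∉ t := fun hc => (Finset.mem_erase.mp (ht.1 hc)).1 rfl
    refine ⟨⟨fun x hx => ?_, ?_⟩, Finset.mem_insert_self a t⟩
    · rcases Finset.mem_insert.mp hx with rfl | hxt
      · exact ha
      · exact Finset.mem_of_mem_erase (ht.1 hxt)
    · rw [Finset.card_insert_of_notMem hat, ht.2]; omega
  · intro t ht
    simp only [Finset.mem_coe, Finset.mem_filter] at ht
    exact Finset.insert_erase ht.2
  · intro t ht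
    simp only [Finset.mem_coe, Finset.mem_powersetCard] at ht
    exact Finset.erase_insert (fun hc => (Finset.mem_erase.mp (ht.1 hc)).1 rfl)

lemma card_half_cover (K κ : ℕ) (hκ : 1 ≤ κ) (i j : Fin K) (hij : i ≠ j) :
    (Finset.univ.filter fun b : Blk K κ => i = b.1.1 ∧ j ∈ b.1.2).card
      = (K-2).choose (κ-1) := by
  have h1 : (Finset.univ.filter fun b : Blk K κ => i = b.1.1 ∧ j ∈ b.1.2).card
      = (((Finset.univ.erase i).powersetCard κ).filter (fun t => j ∈ t)).card := by
    refine Finset.card_bij' (fun b _ => b.1.2) (fun t ht => (⟨(i, t), ?_⟩ : Blk K κ)) ?_ ?_ ?_ ?_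
    · simp only [Finset.mem_filter, Finset.mem_powersetCard] at ht
      exact ⟨fun hc => (Finset.mem_erase.mp (ht.1.1 hc)).1 rfl, ht.1.2⟩
    · intro b hb
      simp only [Finset.mem_filter, Finset.mem_powersetCard] at hb ⊢
      refine ⟨⟨Finset.subset_erase.mpr ⟨Finset.subset_univ _, hb.2.1 ▸ b.2.1⟩, b.2.2⟩, hb.2.2⟩
    · intro t ht; exact Finset.mem_filter.mpr ⟨Finset.mem_univ _, rfl, (Finset.mem_filter.mp ht).2⟩
    · intro b hb
      have := (Finset.mem_filter.mp hb).2.1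
      exact Subtype.ext (Prod.ext this rfl)
    · intro t ht; rfl
  rw [h1, card_subsets_with_mem _ j
      (Finset.mem_erase.mpr ⟨fun hc => hij hc.symm, Finset.mem_univ _⟩) κ hκ,
    Finset.card_erase_of_mem (Finset.mem_univ i), Finset.card_univ, Fintype.card_fin]
  congr 1

lemma card_cover (K κ : ℕ) (hκ : 1 ≤ κ) (q : PairIdx K) :
    (Finset.univ.filter fun b : Blk K κ => inBlock b q).card = 2 * (K-2).choose (κ-1) := by
  have hne : q.1.1 ≠ q.1.2 := ne_of_lt q.2
  unfold inBlock
  have hdisj : Disjoint (Finset.univ.filter fun b : Blk K κ => q.1.1 = b.1.1 ∧ q.1.2 ∈ b.1.2)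
      (Finset.univ.filter fun b : Blk K κ => q.1.2 = b.1.1 ∧ q.1.1 ∈ b.1.2) := by
    rw [Finset.disjoint_filter]
    rintro b _ ⟨h1, -⟩ ⟨h2, -⟩
    exact hne (h1.trans h2.symm)
  rw [Finset.filter_or, Finset.card_union_of_disjoint hdisj, card_half_cover K κ hκ _ _ hne,
    card_half_cover K κ hκ _ _ hne.symm]
  ring

lemma one_step (K κ : ℕ) (hK : 2 ≤ K) (hκ1 : 1 ≤ κ) (hκ2 : κ ≤ K - 1)
    (h : GVec K → ℝ) (σ : ℝ) (hσ : 0 < σ)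
    (hsc : ∀ w z : GVec K, h w + ⟪z - w, gradient h w⟫ + σ / 2 * ‖z - w‖ ^ 2 ≤ h z)
    (L : Blk K κ → ℝ) (hLpos : ∀ b, 0 < L b)
    (hsmooth : ∀ (b : Blk K κ) (w z : GVec K), (∀ q, ¬ inBlock b q → z q = 0) →
      h (w + z) ≤ h w + ⟪z, gradient h w⟫ + L b / 2 * ‖z‖ ^ 2)
    (Lmax : ℝ) (hLmax : ∀ b, L b ≤ Lmax) (hσL : σ ≤ Lmax) (hLmaxpos : 0 < Lmax)
    (wstar : GVec K) (hwstar_nonneg : ∀ q, 0 ≤ wstar q)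
    (w : GVec K) (hw : ∀ q, 0 ≤ w q) :
    ∑ b : Blk K κ, h (blockProxUpdate h L b w)
      ≤ (Fintype.card (Blk K κ) : ℝ) *
        (h wstar + (1 - 2*κ*σ/(K*((K:ℝ)-1)*Lmax)) * (h w - h wstar)) := by
  set g : GVec K := gradient h w with hg
  set β : ℝ := σ / Lmax with hβ
  have hβpos : 0 < β := div_pos hσ hLmaxpos
  have hβle : β ≤ 1 := (div_le_one hLmaxpos).mpr hσL
  -- the comparison direction
  set t : PairIdx K → ℝ := fun q => β * (wstar q - w q) with ht
  have hfeas : ∀ q, 0 ≤ w q + t q := by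
    intro q
    have h1 := hw q
    have h2 := hwstar_nonneg q
    simp only [ht]
    nlinarith
  -- per-block bound
  have hb : ∀ b : Blk K κ, h (blockProxUpdate h L b w)
      ≤ h w + ∑ q : PairIdx K,
          (if inBlock b q then t q * g q + Lmax/2 * (t q)^2 else 0) := by
    intro b
    set z : GVec K := WithLp.toLp 2 (fun q => if inBlock b q then max 0 (w q - (1/L b) * g q) - w q else 0)
      with hz
    have hzsupp : ∀ q, ¬ inBlock b q → z q = 0 := by
      intro q hq; simp [hz, hq]
    have hwz : w + z = blockProxUpdate h L b w := by
      ext q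
      show w q + z q = _
      simp only [hz, blockProxUpdate, PiLp.toLp_apply]
      split <;> ring
    have h1 := hsmooth b w z hzsupp
    rw [hwz] at h1
    have hinner : ⟪z, g⟫ = ∑ q : PairIdx K, z q * g q := by
      simp [PiLp.inner_apply, RCLike.inner_apply, mul_comm]
    have hnorm : ‖z‖^2 = ∑ q : PairIdx K, z q * z q := by
      rw [EuclideanSpace.norm_sq_eq]
      simp only [Real.norm_eq_abs, sq_abs, sq, abs_mul_abs_self]
    rw [hinner, hnorm, Finset.mul_sum, add_assoc, ← Finset.sum_add_distrib] at h1
    refine h1.trans ?_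
    have key : ∀ q : PairIdx K, z q * g q + L b / 2 * (z q * z q)
        ≤ (if inBlock b q then t q * g q + Lmax/2 * (t q)^2 else 0) := by
      intro q
      by_cases hq : inBlock b q
      · simp only [hz, hq, if_true, PiLp.toLp_apply]
        have := quad_prox (L b) Lmax (g q) (w q) (t q) (hLpos b) (hLmax b) (hw q) (hfeas q)
        nlinarith [this]
      · simp [hz, hq]
    exact add_le_add_right (Finset.sum_le_sum (fun q _ => key q)) (h w)
  -- sum over blocks
  have hsum : ∑ b : Blk K κ, h (blockProxUpdate h L b w)
      ≤ (Fintype.card (Blk K κ) : ℝ) * h w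
        + (2 * (K-2).choose (κ-1) : ℝ) *
          ∑ q : PairIdx K, (t q * g q + Lmax/2 * (t q)^2) := by
    calc ∑ b : Blk K κ, h (blockProxUpdate h L b w)
        ≤ ∑ b : Blk K κ, (h w + ∑ q : PairIdx K,
            (if inBlock b q then t q * g q + Lmax/2 * (t q)^2 else 0)) :=
          Finset.sum_le_sum (fun b _ => hb b)
      _ = (Fintype.card (Blk K κ) : ℝ) * h w
          + ∑ q : PairIdx K, ∑ b : Blk K κ,
              (if inBlock b q then t q * g q + Lmax/2 * (t q)^2 else 0) := by
          rw [Finset.sum_add_distrib, Finset.sum_const, Finset.card_univ, nsmul_eq_mul,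
            Finset.sum_comm]
      _ = (Fintype.card (Blk K κ) : ℝ) * h w
          + (2 * (K-2).choose (κ-1) : ℝ) *
            ∑ q : PairIdx K, (t q * g q + Lmax/2 * (t q)^2) := by
          congr 1
          rw [Finset.mul_sum]
          refine Finset.sum_congr rfl (fun q _ => ?_)
          rw [← Finset.sum_filter, Finset.sum_const, card_cover K κ hκ1 q, nsmul_eq_mul]
          push_cast
          ring
  -- bound the inner sum using strong convexity
  have hinner2 : ∑ q : PairIdx K, (t q * g q + Lmax/2 * (t q)^2)
      = β * ⟪wstar - w, g⟫ + Lmax/2 * β^2 * ‖wstar - w‖^2 := by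
    have e1 : ⟪wstar - w, g⟫ = ∑ q : PairIdx K, (wstar q - w q) * g q := by
      simp [PiLp.inner_apply, RCLike.inner_apply, PiLp.sub_apply, mul_comm]
    have e2 : ‖wstar - w‖^2 = ∑ q : PairIdx K, (wstar q - w q) * (wstar q - w q) := by
      rw [EuclideanSpace.norm_sq_eq]
      simp only [PiLp.sub_apply, Real.norm_eq_abs, sq_abs, sq, abs_mul_abs_self]
    rw [e1, e2, Finset.mul_sum, Finset.mul_sum, ← Finset.sum_add_distrib]
    refine Finset.sum_congr rfl (fun q _ => ?_)
    simp only [ht]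
    ring
  have hstrong := hsc w wstar
  rw [← hg] at hstrong
  have hq2 : ∑ q : PairIdx K, (t q * g q + Lmax/2 * (t q)^2) ≤ β * (h wstar - h w) := by
    rw [hinner2]
    have h4 : Lmax/2*β^2 = β*(σ/2) := by rw [hβ]; field_simp
    have h5 : ⟪wstar - w, g⟫ + σ/2*‖wstar - w‖^2 ≤ h wstar - h w := by linarith
    calc β * ⟪wstar - w, g⟫ + Lmax/2*β^2*‖wstar - w‖^2
        = β * (⟪wstar - w, g⟫ + σ/2*‖wstar - w‖^2) := by
          linear_combination ‖wstar - w‖^2 * h4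
      _ ≤ β * (h wstar - h w) := mul_le_mul_of_nonneg_left h5 hβpos.le
  -- combinatorial identity
  have hnat : 2*(K-2).choose (κ-1) * (K*(K-1)) = 2*κ*(K*(K-1).choose κ) := by
    have hid := Nat.add_one_mul_choose_eq (K-2) (κ-1)
    rw [show K-2+1 = K-1 by omega, show κ-1+1 = κ by omega] at hid
    calc 2*(K-2).choose (κ-1) * (K*(K-1)) = 2*K*((K-1)*(K-2).choose (κ-1)) := by ring
      _ = 2*K*((K-1).choose κ * κ) := by rw [hid]
      _ = 2*κ*(K*(K-1).choose κ) := by ring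
  have hcast : (2*(K-2).choose (κ-1) : ℝ) * (K*((K:ℝ)-1))
      = 2*κ*(Fintype.card (Blk K κ) : ℝ) := by
    rw [card_blk K κ]
    have : ((K:ℝ) - 1) = ((K - 1 : ℕ) : ℝ) := by
      rw [Nat.cast_sub (by omega : 1 ≤ K)]; push_cast; ring
    rw [this]
    exact_mod_cast congrArg (Nat.cast : ℕ → ℝ) hnat
  -- final rearrangement
  have hKpos : (0:ℝ) < K := by positivity
  have hK1pos : (0:ℝ) < (K:ℝ) - 1 := by
    have : (2:ℝ) ≤ K := by exact_mod_cast hK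
    linarith
  have hBpos : (0:ℝ) < (Fintype.card (Blk K κ) : ℝ) := by
    rw [card_blk K κ]
    have : 0 < (K-1).choose κ := Nat.choose_pos (by omega)
    positivity
  have hNβ : (2 * (K-2).choose (κ-1) : ℝ) * β
      = (Fintype.card (Blk K κ) : ℝ) * (2*κ*σ/(K*((K:ℝ)-1)*Lmax)) := by
    have hd1 : Lmax ≠ 0 := hLmaxpos.ne'
    have hd2 : (K*((K:ℝ)-1)*Lmax) ≠ 0 := by positivity
    rw [hβ, ← mul_div_assoc, ← mul_div_assoc, div_eq_div_iff hd1 hd2]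
    linear_combination (σ*Lmax) * hcast
  calc ∑ b : Blk K κ, h (blockProxUpdate h L b w)
      ≤ (Fintype.card (Blk K κ) : ℝ) * h w
        + (2 * (K-2).choose (κ-1) : ℝ) * (β * (h wstar - h w)) := by
        refine hsum.trans (add_le_add_right ?_ _)
        exact mul_le_mul_of_nonneg_left hq2 (by positivity)
    _ = (Fintype.card (Blk K κ) : ℝ) *
        (h wstar + (1 - 2*κ*σ/(K*((K:ℝ)-1)*Lmax)) * (h w - h wstar)) := by
        have : (2 * (K-2).choose (κ-1) : ℝ) * (β * (h wstar - h w))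
            = ((2 * (K-2).choose (κ-1) : ℝ) * β) * (h wstar - h w) := by ring
        rw [this, hNβ]
        ring

lemma iter_bound (K κ : ℕ) (h : GVec K → ℝ) (L : Blk K κ → ℝ) (wstar : GVec K) (ρ : ℝ)
    (hρ0 : 0 ≤ ρ)
    (hstep : ∀ w : GVec K, (∀ q, 0 ≤ w q) →
      ∑ b : Blk K κ, h (blockProxUpdate h L b w)
        ≤ (Fintype.card (Blk K κ) : ℝ) * (h wstar + ρ * (h w - h wstar))) :
    ∀ (n : ℕ) (w : GVec K), (∀ q, 0 ≤ w q) →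
      ∑ bs : Fin n → Blk K κ, h (iterSeq h L bs w)
        ≤ (Fintype.card (Blk K κ) : ℝ)^n * (h wstar + ρ^n * (h w - h wstar)) := by
  intro n
  induction n with
  | zero =>
      intro w hw
      have h0 : ∑ bs : Fin 0 → Blk K κ, h (iterSeq h L bs w) = h w := by
        rw [Fintype.sum_unique]
        simp [iterSeq]
      rw [h0]
      simp
  | succ n ih =>
      intro w hw
      set Br : ℝ := (Fintype.card (Blk K κ) : ℝ) with hBr
      have hBr0 : 0 ≤ Br := by positivity
      have hpres : ∀ b : Blk K κ, ∀ q, 0 ≤ blockProxUpdate h L b w q := by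
        intro b q
        unfold blockProxUpdate
        rw [PiLp.toLp_apply]
        split
        · exact le_max_left _ _
        · exact hw q
      have e : ∀ (b : Blk K κ) (bs : Fin n → Blk K κ),
          iterSeq h L (Fin.cons b bs) w = iterSeq h L bs (blockProxUpdate h L b w) := by
        intro b bs
        simp [iterSeq, List.ofFn_succ, Fin.cons_zero, Fin.cons_succ]
      have hbij : Function.Bijective
          (fun p : Blk K κ × (Fin n → Blk K κ) => (Fin.cons p.1 p.2 : Fin (n+1) → Blk K κ)) := by
        constructor
        · rintro ⟨a, f⟩ ⟨b, g⟩ hfg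
          have h0 := congrFun hfg 0
          simp only [Fin.cons_zero] at h0
          have hs : f = g := funext fun i => by
            have := congrFun hfg i.succ
            simpa [Fin.cons_succ] using this
          simp [h0, hs]
        · intro f
          exact ⟨(f 0, fun i => f i.succ), by
            funext i
            cases i using Fin.cases <;> simp [Fin.cons_zero, Fin.cons_succ]⟩
      have hre : ∑ bs : Fin (n+1) → Blk K κ, h (iterSeq h L bs w)
          = ∑ b : Blk K κ, ∑ bs : Fin n → Blk K κ,
              h (iterSeq h L bs (blockProxUpdate h L b w)) := by
        calc ∑ bs : Fin (n+1) → Blk K κ, h (iterSeq h L bs w)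
            = ∑ p : Blk K κ × (Fin n → Blk K κ), h (iterSeq h L (Fin.cons p.1 p.2) w) :=
              (Fintype.sum_bijective _ hbij _ _ (fun p => rfl)).symm
          _ = ∑ p : Blk K κ × (Fin n → Blk K κ),
                h (iterSeq h L p.2 (blockProxUpdate h L p.1 w)) :=
              Finset.sum_congr rfl (fun p _ => by rw [e p.1 p.2])
          _ = _ := Fintype.sum_prod_type _
      rw [hre]
      have step1 : ∑ b : Blk K κ, ∑ bs : Fin n → Blk K κ,
            h (iterSeq h L bs (blockProxUpdate h L b w))
          ≤ ∑ b : Blk K κ, Br^n * (h wstar + ρ^n * (h (blockProxUpdate h L b w) - h wstar)) :=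
        Finset.sum_le_sum (fun b _ => ih (blockProxUpdate h L b w) (hpres b))
      refine step1.trans ?_
      have expand : ∑ b : Blk K κ, Br^n * (h wstar + ρ^n * (h (blockProxUpdate h L b w) - h wstar))
          = Br * (Br^n * h wstar - Br^n * ρ^n * h wstar)
            + Br^n * ρ^n * ∑ b : Blk K κ, h (blockProxUpdate h L b w) := by
        rw [Finset.sum_congr rfl (fun b _ => show Br^n * (h wstar + ρ^n * (h (blockProxUpdate h L b w) - h wstar)) = (Br^n * h wstar - Br^n * ρ^n * h wstar) + Br^n * ρ^n * h (blockProxUpdate h L b w) from by ring)]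
        rw [Finset.sum_add_distrib, Finset.sum_const, Finset.card_univ, nsmul_eq_mul, ← Finset.mul_sum, ← hBr]
      rw [expand]
      have step2 : Br^n * ρ^n * ∑ b : Blk K κ, h (blockProxUpdate h L b w)
          ≤ Br^n * ρ^n * (Br * (h wstar + ρ * (h w - h wstar))) :=
        mul_le_mul_of_nonneg_left (hstep w hw) (by positivity)
      calc Br * (Br^n * h wstar - Br^n * ρ^n * h wstar)
            + Br^n * ρ^n * ∑ b : Blk K κ, h (blockProxUpdate h L b w)
          ≤ Br * (Br^n * h wstar - Br^n * ρ^n * h wstar)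
            + Br^n * ρ^n * (Br * (h wstar + ρ * (h w - h wstar))) := by linarith
        _ = Br^(n+1) * (h wstar + ρ^(n+1) * (h w - h wstar)) := by ring

/-- Linear convergence of decentralized graph learning (Theorem 2),
stated as a finite average over i.i.d. uniform block choices:
`(1/|B|^T) Σ_{(b_1,…,b_T)} h(w^T) − h(w*) ≤ ρ^T (h(w⁰) − h(w*))`
with `ρ = 1 − 2κσ/(K(K−1)L_max)`. -/
theorem graph_learning_linear_convergence
    (K κ : ℕ) (hK : 2 ≤ K) (hκ1 : 1 ≤ κ) (hκ2 : κ ≤ K - 1)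
    (h : GVec K → ℝ) (hdiff : Differentiable ℝ h)
    (σ : ℝ) (hσ : 0 < σ)
    (hsc : ∀ w z : GVec K, h w + ⟪z - w, gradient h w⟫ + σ / 2 * ‖z - w‖ ^ 2 ≤ h z)
    (L : Blk K κ → ℝ) (hLpos : ∀ b, 0 < L b)
    (hsmooth : ∀ (b : Blk K κ) (w z : GVec K), (∀ q, ¬ inBlock b q → z q = 0) →
      h (w + z) ≤ h w + ⟪z, gradient h w⟫ + L b / 2 * ‖z‖ ^ 2)
    (Lmax : ℝ) (hLmax : ∀ b, L b ≤ Lmax)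
    (wstar : GVec K) (hwstar_nonneg : ∀ q, 0 ≤ wstar q)
    (hwstar_min : ∀ z : GVec K, (∀ q, 0 ≤ z q) → h wstar ≤ h z)
    (w0 : GVec K) (hw0_nonneg : ∀ q, 0 ≤ w0 q)
    (T : ℕ) (hT : 1 ≤ T) :
    (Fintype.card (Fin T → Blk K κ) : ℝ)⁻¹ *
        (∑ bs : Fin T → Blk K κ, h (iterSeq h L bs w0)) - h wstar
      ≤ (1 - 2 * κ * σ / (K * ((K : ℝ) - 1) * Lmax)) ^ T * (h w0 - h wstar) := by
  -- construct a block and a coordinate in it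
  have hex : ∃ (b0 : Blk K κ) (q0 : PairIdx K), inBlock b0 q0 := by
    have hk0 : (0:ℕ) < K := by omega
    set k0 : Fin K := ⟨0, hk0⟩ with hk0def
    have hcard : κ ≤ (Finset.univ.erase k0).card := by
      rw [Finset.card_erase_of_mem (Finset.mem_univ k0), Finset.card_univ, Fintype.card_fin]
      omega
    obtain ⟨𝒦, hsub, hcardK⟩ := Finset.exists_subset_card_eq hcard
    have hk0notin : k0 ∉ 𝒦 := fun hc => (Finset.mem_erase.mp (hsub hc)).1 rfl
    obtain ⟨l, hl⟩ := Finset.card_pos.mp (show 0 < 𝒦.card by rw [hcardK]; omega)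
    have hlk : l ≠ k0 := fun hc => hk0notin (hc ▸ hl)
    refine ⟨⟨(k0, 𝒦), hk0notin, hcardK⟩, ?_⟩
    rcases lt_or_gt_of_ne hlk with hlt | hgt
    · exact ⟨⟨(l, k0), hlt⟩, Or.inr ⟨rfl, hl⟩⟩
    · exact ⟨⟨(k0, l), hgt⟩, Or.inl ⟨rfl, hl⟩⟩
  obtain ⟨b0, q0, hq0⟩ := hex
  have hLmaxpos : 0 < Lmax := lt_of_lt_of_le (hLpos b0) (hLmax b0)
  -- σ ≤ Lmax
  have hσL : σ ≤ Lmax := by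
    set z : GVec K := EuclideanSpace.single q0 (1:ℝ) with hzdef
    have hz1 : ‖z‖^2 = 1 := by rw [hzdef, EuclideanSpace.norm_single]; norm_num
    have hs1 := hsc 0 (0 + z)
    have hs2 := hsmooth b0 0 z (fun q hq => by
      rw [hzdef, EuclideanSpace.single_apply]
      exact if_neg (fun hc => hq (by rw [hc]; exact hq0)))
    simp only [zero_add, sub_zero] at hs1 hs2
    rw [hz1] at hs1 hs2
    have := hLmax b0
    linarith
  -- nonnegativity of ρ
  have hK2 : (2:ℝ) ≤ K := by exact_mod_cast hK
  have hKpos : (0:ℝ) < K := by positivity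
  have hK1pos : (0:ℝ) < (K:ℝ) - 1 := by linarith
  have hκK : (κ:ℝ) ≤ (K:ℝ) - 1 := by
    have h1 : ((κ:ℕ):ℝ) ≤ ((K-1:ℕ):ℝ) := Nat.cast_le.mpr hκ2
    rwa [Nat.cast_sub (by omega : 1 ≤ K), Nat.cast_one] at h1
  have hden : (0:ℝ) < K*((K:ℝ)-1)*Lmax := by
    exact mul_pos (mul_pos hKpos hK1pos) hLmaxpos
  have hρ0 : 0 ≤ 1 - 2 * κ * σ / (K * ((K : ℝ) - 1) * Lmax) := by
    rw [sub_nonneg, div_le_one hden]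
    have hκ0 : (0:ℝ) ≤ κ := by positivity
    nlinarith [mul_le_mul_of_nonneg_right hκK hσ.le,
      mul_le_mul_of_nonneg_left hσL (by linarith : (0:ℝ) ≤ 2*((K:ℝ)-1)),
      mul_le_mul_of_nonneg_right hK2 (mul_nonneg hK1pos.le hLmaxpos.le)]
  -- step inequality and induction
  have hstep := fun (w : GVec K) (hw : ∀ q, 0 ≤ w q) =>
    one_step K κ hK hκ1 hκ2 h σ hσ hsc L hLpos hsmooth Lmax hLmax hσL hLmaxpos
      wstar hwstar_nonneg w hw
  have hmain := iter_bound K κ h L wstar _ hρ0 hstep T w0 hw0_nonneg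
  -- divide through
  have hBpos : (0:ℝ) < (Fintype.card (Blk K κ) : ℝ) := by
    have : Nonempty (Blk K κ) := ⟨b0⟩
    exact_mod_cast Fintype.card_pos
  have hBTpos : (0:ℝ) < (Fintype.card (Blk K κ) : ℝ)^T := pow_pos hBpos T
  have hcardT : (Fintype.card (Fin T → Blk K κ) : ℝ) = (Fintype.card (Blk K κ) : ℝ)^T := by
    rw [Fintype.card_fun, Fintype.card_fin]
    push_cast
    ring
  rw [hcardT]
  have hchain : ((Fintype.card (Blk K κ) : ℝ)^T)⁻¹ *
      (∑ bs : Fin T → Blk K κ, h (iterSeq h L bs w0))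
      ≤ h wstar + (1 - 2 * κ * σ / (K * ((K : ℝ) - 1) * Lmax))^T * (h w0 - h wstar) := by
    calc ((Fintype.card (Blk K κ) : ℝ)^T)⁻¹ *
        (∑ bs : Fin T → Blk K κ, h (iterSeq h L bs w0))
        ≤ ((Fintype.card (Blk K κ) : ℝ)^T)⁻¹ *
          ((Fintype.card (Blk K κ) : ℝ)^T *
            (h wstar + (1 - 2 * κ * σ / (K * ((K : ℝ) - 1) * Lmax))^T * (h w0 - h wstar))) :=
          mul_le_mul_of_nonneg_left hmain (by positivity)
      _ = _ := by
          rw [inv_mul_cancel_left₀ hBTpos.ne']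
  linarith
end

section
/- (Proximal surrogate bound, eq. (H3).) Let C ⊆ ℝ^N be a nonempty closed convex set, let h : ℝ^N → ℝ be differentiable and σ-strongly convex with σ > 0, let w* be the minimizer of h over C, and let L ≥ σ. Then for every w ∈ C, inf_{z ∈ C} [ h(w) + ⟨z − w, ∇h(w)⟩ + (L/2)·‖z − w‖₂² ] ≤ (σ/L)·h(w*) + (1 − σ/L)·h(w). -/
open scoped RealInnerProductSpace BigOperators

/-- Proximal surrogate bound (eq. (H3)).
For a differentiable σ-strongly convex `h`, a nonempty closed convex `C`,
the minimizer `w*` of `h` over `C`, and `L ≥ σ`, for every `w ∈ C`: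
`inf_{z ∈ C} [h(w) + ⟨z − w, ∇h(w)⟩ + (L/2)‖z − w‖²] ≤ (σ/L)h(w*) + (1 − σ/L)h(w)`. -/
theorem proximal_surrogate_bound
    (N : ℕ) (h : EuclideanSpace ℝ (Fin N) → ℝ)
    (σ L : ℝ) (hσ : 0 < σ) (hσL : σ ≤ L)
    (hdiff : Differentiable ℝ h)
    (hsc : ∀ w z : EuclideanSpace ℝ (Fin N),
      h w + ⟪z - w, gradient h w⟫ + σ / 2 * ‖z - w‖ ^ 2 ≤ h z)
    (C : Set (EuclideanSpace ℝ (Fin N))) (hCne : C.Nonempty)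
    (hCcl : IsClosed C) (hCco : Convex ℝ C)
    (wstar : EuclideanSpace ℝ (Fin N)) (hws : wstar ∈ C)
    (hmin : ∀ z ∈ C, h wstar ≤ h z)
    (w : EuclideanSpace ℝ (Fin N)) (hw : w ∈ C) :
    sInf ((fun z => h w + ⟪z - w, gradient h w⟫ + L / 2 * ‖z - w‖ ^ 2) '' C)
      ≤ σ / L * h wstar + (1 - σ / L) * h w := by
  have hL : 0 < L := lt_of_lt_of_le hσ hσL
  set t : ℝ := σ / L with ht
  have ht0 : 0 ≤ t := le_of_lt (div_pos hσ hL)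
  have ht1 : t ≤ 1 := (div_le_one hL).2 hσL
  set g := gradient h w with hg
  set z : EuclideanSpace ℝ (Fin N) := (1 - t) • w + t • wstar with hz
  have hzC : z ∈ C := hCco hw hws (by linarith) ht0 (by ring)
  have hzw : z - w = t • (wstar - w) := by
    rw [hz]; module
  have hbdd : BddBelow ((fun z => h w + ⟪z - w, g⟫ + L / 2 * ‖z - w‖ ^ 2) '' C) := by
    refine ⟨h w - ‖g‖ ^ 2 / (2 * L), ?_⟩
    rintro x ⟨y, _, rfl⟩
    show h w - ‖g‖ ^ 2 / (2 * L) ≤ h w + ⟪y - w, g⟫ + L / 2 * ‖y - w‖ ^ 2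
    have hcs : |⟪y - w, g⟫| ≤ ‖y - w‖ * ‖g‖ := abs_real_inner_le_norm _ _
    have h1 : -(‖y - w‖ * ‖g‖) ≤ ⟪y - w, g⟫ := neg_le_of_abs_le hcs
    have hn : 0 ≤ ‖y - w‖ := norm_nonneg _
    have h2 : ‖g‖ ^ 2 / (2 * L) * (2 * L) = ‖g‖ ^ 2 :=
      div_mul_cancel₀ _ (by positivity)
    nlinarith [sq_nonneg (L * ‖y - w‖ - ‖g‖), mul_le_mul_of_nonneg_left h1 (le_of_lt hL), hL]
  have hmem : (h w + ⟪z - w, g⟫ + L / 2 * ‖z - w‖ ^ 2)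
      ∈ ((fun z => h w + ⟪z - w, g⟫ + L / 2 * ‖z - w‖ ^ 2) '' C) := ⟨z, hzC, rfl⟩
  have hle := csInf_le hbdd hmem
  refine le_trans hle ?_
  have hinner : ⟪z - w, g⟫ = t * ⟪wstar - w, g⟫ := by
    rw [hzw, real_inner_smul_left]
  have hnorm : ‖z - w‖ ^ 2 = t ^ 2 * ‖wstar - w‖ ^ 2 := by
    rw [hzw, norm_smul, mul_pow, Real.norm_eq_abs, sq_abs]
  have hsc' := hsc w wstar
  rw [hinner, hnorm]
  have htL : t * L = σ := div_mul_cancel₀ σ (ne_of_gt hL)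
  nlinarith [sq_nonneg ‖wstar - w‖, mul_nonneg ht0 (sq_nonneg ‖wstar - w‖)]
end

section
/- (Sub-optimality recursion bound for the Frank-Wolfe step sizes.) Let K ≥ 1 be an integer and C ≥ 0. Let p : ℕ → ℝ satisfy p(0) ≥ 0 and, for all t ≥ 0, p(t+1) ≤ (1 − γ_t/K)·p(t) + γ_t²·C/(2K), where γ_t = 2K/(t + 2K). Then for every t ≥ 0, p(t) ≤ 2K·(C + p(0))/(t + 2K). -/
/-- Sub-optimality recursion bound for the Frank-Wolfe step sizes.
If `p` satisfies `p (t+1) ≤ (1 - γ_t/K) p t + γ_t² C / (2K)` with `γ_t = 2K/(t+2K)`,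
then `p t ≤ 2K(C + p 0)/(t + 2K)` for every `t`. -/
theorem frank_wolfe_suboptimality_recursion
    (K : ℕ) (hK : 1 ≤ K) (C : ℝ) (hC : 0 ≤ C)
    (p : ℕ → ℝ) (hp0 : 0 ≤ p 0)
    (γ : ℕ → ℝ) (hγ : ∀ t : ℕ, γ t = 2 * K / ((t : ℝ) + 2 * K))
    (hrec : ∀ t : ℕ, p (t + 1) ≤ (1 - γ t / K) * p t + (γ t) ^ 2 * C / (2 * K))
    (t : ℕ) :
    p t ≤ 2 * K * (C + p 0) / ((t : ℝ) + 2 * K) := by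
  have hK1 : (1 : ℝ) ≤ K := by exact_mod_cast hK
  have hKpos : (0 : ℝ) < K := by linarith
  induction t with
  | zero =>
    simp only [Nat.cast_zero, zero_add]
    rw [le_div_iff₀ (by positivity)]
    nlinarith
  | succ t ih =>
    have hs : (0 : ℝ) < (t : ℝ) + 2 * K := by positivity
    have hs' : (0 : ℝ) < ((t : ℕ) + 1 : ℕ) + 2 * K := by positivity
    have h1 : p (t + 1) ≤ (1 - γ t / K) * p t + (γ t) ^ 2 * C / (2 * K) := hrec t
    rw [hγ t] at h1
    have hfac : (0 : ℝ) ≤ 1 - 2 * K / ((t : ℝ) + 2 * K) / K := by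
      rw [div_div]
      rw [sub_nonneg, div_le_one (by positivity)]
      nlinarith
    have h2 : (1 - 2 * K / ((t : ℝ) + 2 * K) / K) * p t
        ≤ (1 - 2 * K / ((t : ℝ) + 2 * K) / K) * (2 * K * (C + p 0) / ((t : ℝ) + 2 * K)) :=
      mul_le_mul_of_nonneg_left ih hfac
    have hs2 : (0:ℝ) < (t:ℝ) + 1 + 2 * K := by positivity
    have key : (1 - 2 * K / ((t : ℝ) + 2 * K) / K) * (2 * K * (C + p 0) / ((t : ℝ) + 2 * K))
        + (2 * K / ((t : ℝ) + 2 * K)) ^ 2 * C / (2 * K)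
        = ((((t : ℝ) + 2 * K) - 2) * (2 * K * (C + p 0)) + 2 * K * C) / ((t : ℝ) + 2 * K) ^ 2 := by
      field_simp
    have h3 : ((((t : ℝ) + 2 * K) - 2) * (2 * K * (C + p 0)) + 2 * K * C) / ((t : ℝ) + 2 * K) ^ 2
        ≤ 2 * K * (C + p 0) / ((t : ℝ) + 1 + 2 * K) := by
      rw [div_le_div_iff₀ (by positivity) hs2]
      nlinarith [mul_nonneg hp0 hs.le, mul_nonneg (mul_nonneg hp0 hs.le) hKpos.le,
        mul_nonneg hC hKpos.le, mul_nonneg hp0 hKpos.le]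
    push_cast
    linarith [key ▸ h3]
end

section
/- (Lipschitz bound for the inverse-degree terms of the proposed graph regularizer.) Let K ≥ 2, δ > 0, k ∈ [K], and 𝒦 ⊆ [K]\{k} with |𝒦| = κ ≥ 1. Let w, w' ∈ ℝ^{K(K−1)/2} with w ≥ 0 and w' ≥ 0 that agree on every coordinate outside the block {(k,l) : l ∈ 𝒦}. Define z_{k,𝒦}(w) = ( 1/(d_k(w) + δ) + 1/(d_l(w) + δ) )_{l ∈ 𝒦} ∈ ℝ^κ. Then ‖z_{k,𝒦}(w) − z_{k,𝒦}(w')‖₂ ≤ ((κ+1)/δ²)·‖w_{k,𝒦} − w'_{k,𝒦}‖₂, where w_{k,𝒦} = (w_{k,l})_{l∈𝒦}. -/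
open scoped BigOperators

/-- Degree of user `k`: `d_k(w) = Σ_{l≠k} w_{k,l}`. -/
noncomputable def deg {K : ℕ} (w : GVec K) (k : Fin K) : ℝ :=
  ∑ q : PairIdx K, (if q.1.1 = k ∨ q.1.2 = k then w q else 0)

/-- The entry `w_{k,l}` of a weight vector (`0` on the diagonal). -/
noncomputable def ent {K : ℕ} (w : GVec K) (k l : Fin K) : ℝ :=
  if h : k < l then w ⟨(k, l), h⟩ else if h' : l < k then w ⟨(l, k), h'⟩ else 0

/-- The coordinate `{i,j}` belongs to the block `(k,𝒦)` iff it is of the form `{k,l}`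
with `l ∈ 𝒦`. -/
def inBlk {K : ℕ} (k : Fin K) (S : Finset (Fin K)) (q : PairIdx K) : Prop :=
  (q.1.1 = k ∧ q.1.2 ∈ S) ∨ (q.1.2 = k ∧ q.1.1 ∈ S)

namespace Aux
variable {K : ℕ}

noncomputable def pairOf (k l : Fin K) (h : k ≠ l) : PairIdx K :=
  if hkl : k < l then ⟨(k, l), hkl⟩ else ⟨(l, k), h.lt_or_gt.resolve_left hkl⟩

lemma ent_eq (w : GVec K) (k l : Fin K) (h : k ≠ l) :
    ent w k l = w (pairOf k l h) := by
  unfold ent pairOf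
  rcases h.lt_or_gt with hkl | hlk
  · rw [dif_pos hkl, dif_pos hkl]
  · rw [dif_neg (asymm hlk), dif_pos hlk, dif_neg (asymm hlk)]

lemma pairOf_inj (k l1 l2 : Fin K) (h1 : k ≠ l1) (h2 : k ≠ l2)
    (h : pairOf k l1 h1 = pairOf k l2 h2) : l1 = l2 := by
  unfold pairOf at h
  split_ifs at h with c1 c2 c2 <;>
    simp only [Subtype.mk.injEq, Prod.mk.injEq] at h
  · exact h.2
  · exact absurd h.1 h2
  · exact absurd h.2 h2
  · exact h.1

lemma pairOf_mem (k l : Fin K) (h : k ≠ l) (S : Finset (Fin K)) :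
    inBlk k S (pairOf k l h) ↔ l ∈ S := by
  unfold pairOf inBlk
  split_ifs with c <;> simp [Ne.symm h, h]

lemma exists_pairOf (k : Fin K) (S : Finset (Fin K)) (hkS : k ∉ S) (q : PairIdx K)
    (hq : inBlk k S q) : ∃ (l : Fin K) (hl : l ∈ S) (h : k ≠ l), pairOf k l h = q := by
  rcases hq with ⟨h1, h2⟩ | ⟨h1, h2⟩
  · have hk2 : k < q.1.2 := by rw [← h1]; exact q.2
    refine ⟨q.1.2, h2, ne_of_lt hk2, ?_⟩
    unfold pairOf
    rw [dif_pos hk2]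
    exact Subtype.ext (Prod.ext h1.symm rfl)
  · have hk2 : q.1.1 < k := by rw [← h1]; exact q.2
    refine ⟨q.1.1, h2, (ne_of_lt hk2).symm, ?_⟩
    unfold pairOf
    rw [dif_neg (asymm hk2)]
    exact Subtype.ext (Prod.ext rfl h1.symm)

lemma pairOf_contains (k l' l : Fin K) (h' : k ≠ l') :
    ((pairOf k l' h').1.1 = l ∨ (pairOf k l' h').1.2 = l) ↔ (l = k ∨ l = l') := by
  unfold pairOf
  split_ifs with c <;> simp only <;>
    first
      | exact or_congr eq_comm eq_comm
      | exact or_comm.trans (or_congr eq_comm eq_comm)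

end Aux

namespace Aux
variable {K : ℕ}

lemma deg_nonneg (w : GVec K) (hw : ∀ q, 0 ≤ w q) (m : Fin K) : 0 ≤ deg w m :=
  Finset.sum_nonneg fun q _ => by
    by_cases h : q.1.1 = m ∨ q.1.2 = m <;> simp [h, hw q]

lemma inv_diff (x y δ : ℝ) (hx : 0 ≤ x) (hy : 0 ≤ y) (hδ : 0 < δ) :
    |1/(x+δ) - 1/(y+δ)| ≤ |x - y| / δ^2 := by
  have hx' : 0 < x + δ := by linarith
  have hy' : 0 < y + δ := by linarith
  have h1 : 1/(x+δ) - 1/(y+δ) = (y - x) / ((x+δ)*(y+δ)) := by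
    field_simp
    ring
  rw [h1, abs_div, abs_of_pos (mul_pos hx' hy'), abs_sub_comm y x]
  gcongr
  nlinarith

lemma deg_sub_k (k : Fin K) (S : Finset (Fin K)) (hkS : k ∉ S)
    (w w' : GVec K) (hagree : ∀ q, ¬ inBlk k S q → w q = w' q) :
    deg w k - deg w' k = ∑ l ∈ S, (ent w k l - ent w' k l) := by
  classical
  unfold deg
  rw [← Finset.sum_sub_distrib]
  have h1 : ∀ q : PairIdx K,
      ((if q.1.1 = k ∨ q.1.2 = k then w q else 0) -
        (if q.1.1 = k ∨ q.1.2 = k then w' q else 0))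
        = if inBlk k S q then w q - w' q else 0 := by
    intro q
    by_cases hb : inBlk k S q
    · have hk : q.1.1 = k ∨ q.1.2 = k := hb.imp And.left And.left
      simp [hb, hk]
    · have := hagree q hb
      by_cases hk : q.1.1 = k ∨ q.1.2 = k <;> simp [hb, hk, this]
  simp_rw [h1]
  rw [← Finset.sum_filter]
  refine (Finset.sum_bij (fun l hl => pairOf k l (fun he => hkS (he ▸ hl))) ?_ ?_ ?_ ?_).symm
  · intro l hl
    simp [Finset.mem_filter, (pairOf_mem k l (fun he => hkS (he ▸ hl)) S).2 hl]
  · intro l1 h1 l2 h2 h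
    exact pairOf_inj _ _ _ _ _ h
  · intro q hq
    obtain ⟨l, hl, h, hpq⟩ := exists_pairOf k S hkS q (Finset.mem_filter.mp hq).2
    exact ⟨l, hl, hpq⟩
  · intro l hl
    rw [ent_eq w k l (fun he => hkS (he ▸ hl)), ent_eq w' k l (fun he => hkS (he ▸ hl))]

lemma deg_sub_l (k : Fin K) (S : Finset (Fin K)) (hkS : k ∉ S)
    (w w' : GVec K) (hagree : ∀ q, ¬ inBlk k S q → w q = w' q)
    (l : Fin K) (hl : l ∈ S) :
    deg w l - deg w' l = ent w k l - ent w' k l := by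
  classical
  have hkl : k ≠ l := fun he => hkS (he ▸ hl)
  unfold deg
  rw [← Finset.sum_sub_distrib]
  have h1 : ∀ q : PairIdx K,
      ((if q.1.1 = l ∨ q.1.2 = l then w q else 0) -
        (if q.1.1 = l ∨ q.1.2 = l then w' q else 0))
        = if q = pairOf k l hkl then w q - w' q else 0 := by
    intro q
    by_cases hb : inBlk k S q
    · obtain ⟨l', hl', h', rfl⟩ := exists_pairOf k S hkS q hb
      by_cases hP : (pairOf k l' h').1.1 = l ∨ (pairOf k l' h').1.2 = l
      · have hor : l = k ∨ l = l' := (pairOf_contains k l' l h').mp hP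
        have hll' : l = l' := hor.resolve_left (fun he => hkS (he ▸ hl))
        subst hll'
        have he : pairOf k l h' = pairOf k l hkl := rfl
        rw [if_pos he, if_pos hP, if_pos hP]
      · have hne : pairOf k l' h' ≠ pairOf k l hkl := by
          intro he
          exact hP ((pairOf_contains k l' l h').mpr
            (Or.inr (pairOf_inj _ _ _ _ _ he).symm))
        simp [hP, hne]
    · have hqe := hagree q hb
      have hne : q ≠ pairOf k l hkl := by
        intro he; rw [he] at hb; exact hb ((pairOf_mem k l hkl S).2 hl)
      by_cases hP : q.1.1 = l ∨ q.1.2 = l <;> simp [hP, hne, hqe]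
  simp_rw [h1]
  rw [Finset.sum_ite_eq' Finset.univ (pairOf k l hkl) (fun q => w q - w' q)]
  rw [ent_eq w k l hkl, ent_eq w' k l hkl]
  simp

end Aux

/-- Lipschitz bound for the inverse-degree terms of the proposed graph
regularizer: with `z_{k,𝒦}(w) = (1/(d_k(w)+δ) + 1/(d_l(w)+δ))_{l∈𝒦}`, for `w, w' ≥ 0`
agreeing outside the block `(k,𝒦)`,
`‖z_{k,𝒦}(w) − z_{k,𝒦}(w')‖₂ ≤ ((κ+1)/δ²)‖w_{k,𝒦} − w'_{k,𝒦}‖₂`. -/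
theorem inverse_degree_terms_lipschitz
    (K : ℕ) (hK : 2 ≤ K) (δ : ℝ) (hδ : 0 < δ)
    (k : Fin K) (S : Finset (Fin K)) (hkS : k ∉ S) (κ : ℕ) (hcard : S.card = κ)
    (hκ : 1 ≤ κ)
    (w w' : GVec K) (hw : ∀ q, 0 ≤ w q) (hw' : ∀ q, 0 ≤ w' q)
    (hagree : ∀ q, ¬ inBlk k S q → w q = w' q) :
    Real.sqrt (∑ l ∈ S,
        ((1 / (deg w k + δ) + 1 / (deg w l + δ))
          - (1 / (deg w' k + δ) + 1 / (deg w' l + δ))) ^ 2)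
      ≤ ((κ : ℝ) + 1) / δ ^ 2 *
        Real.sqrt (∑ l ∈ S, (ent w k l - ent w' k l) ^ 2) := by
  classical
  set a : Fin K → ℝ := fun l => ent w k l - ent w' k l with ha
  have hdk : deg w k - deg w' k = ∑ l ∈ S, a l := Aux.deg_sub_k k S hkS w w' hagree
  have hdl : ∀ l ∈ S, deg w l - deg w' l = a l :=
    fun l hl => Aux.deg_sub_l k S hkS w w' hagree l hl
  set s : ℝ := ∑ l ∈ S, |a l| with hs
  have hs0 : 0 ≤ s := Finset.sum_nonneg fun l _ => abs_nonneg _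
  have hδ2 : (0:ℝ) < δ^2 := by positivity
  have hcoord : ∀ l ∈ S,
      |(1 / (deg w k + δ) + 1 / (deg w l + δ))
        - (1 / (deg w' k + δ) + 1 / (deg w' l + δ))| ≤ (s + |a l|) / δ^2 := by
    intro l hl
    have e1 : |1/(deg w k + δ) - 1/(deg w' k + δ)| ≤ s / δ^2 := by
      calc |1/(deg w k + δ) - 1/(deg w' k + δ)|
          ≤ |deg w k - deg w' k| / δ^2 :=
            Aux.inv_diff _ _ _ (Aux.deg_nonneg w hw k) (Aux.deg_nonneg w' hw' k) hδ
        _ ≤ s / δ^2 := by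
            gcongr
            rw [hdk]
            exact Finset.abs_sum_le_sum_abs _ _
    have e2 : |1/(deg w l + δ) - 1/(deg w' l + δ)| ≤ |a l| / δ^2 := by
      calc |1/(deg w l + δ) - 1/(deg w' l + δ)|
          ≤ |deg w l - deg w' l| / δ^2 :=
            Aux.inv_diff _ _ _ (Aux.deg_nonneg w hw l) (Aux.deg_nonneg w' hw' l) hδ
        _ = |a l| / δ^2 := by rw [hdl l hl]
    calc |(1 / (deg w k + δ) + 1 / (deg w l + δ))
        - (1 / (deg w' k + δ) + 1 / (deg w' l + δ))|
        = |(1/(deg w k + δ) - 1/(deg w' k + δ)) + (1/(deg w l + δ) - 1/(deg w' l + δ))| := by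
          ring_nf
      _ ≤ |1/(deg w k + δ) - 1/(deg w' k + δ)| + |1/(deg w l + δ) - 1/(deg w' l + δ)| :=
          abs_add_le _ _
      _ ≤ s/δ^2 + |a l|/δ^2 := add_le_add e1 e2
      _ = (s + |a l|)/δ^2 := by ring
  have hsum : ∑ l ∈ S,
      ((1 / (deg w k + δ) + 1 / (deg w l + δ))
        - (1 / (deg w' k + δ) + 1 / (deg w' l + δ))) ^ 2
      ≤ ∑ l ∈ S, ((s + |a l|)/δ^2)^2 := by
    refine Finset.sum_le_sum fun l hl => ?_
    calc ((1 / (deg w k + δ) + 1 / (deg w l + δ))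
        - (1 / (deg w' k + δ) + 1 / (deg w' l + δ))) ^ 2
        = |(1 / (deg w k + δ) + 1 / (deg w l + δ))
          - (1 / (deg w' k + δ) + 1 / (deg w' l + δ))| ^ 2 := (sq_abs _).symm
      _ ≤ ((s + |a l|)/δ^2)^2 := by
          apply pow_le_pow_left₀ (abs_nonneg _) (hcoord l hl)
  have hCS : s^2 ≤ (κ:ℝ) * ∑ l ∈ S, (a l)^2 := by
    have h := sq_sum_le_card_mul_sum_sq (s := S) (f := fun l => |a l|)
    simp_rw [sq_abs] at h
    rw [hcard] at h
    exact_mod_cast h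
  have hexp : ∑ l ∈ S, ((s + |a l|)/δ^2)^2
      = ((κ:ℝ) * s^2 + 2*s*s + ∑ l ∈ S, (a l)^2) / (δ^2)^2 := by
    simp_rw [div_pow]
    rw [← Finset.sum_div]
    congr 1
    simp_rw [add_sq, sq_abs]
    rw [Finset.sum_add_distrib, Finset.sum_add_distrib, Finset.sum_const, hcard]
    have h2 : ∑ l ∈ S, 2*s*|a l| = 2*s*s := by
      rw [← Finset.mul_sum, hs]
    rw [h2, nsmul_eq_mul]
  have hfinal : ∑ l ∈ S,
      ((1 / (deg w k + δ) + 1 / (deg w l + δ))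
        - (1 / (deg w' k + δ) + 1 / (deg w' l + δ))) ^ 2
      ≤ (((κ:ℝ)+1)/δ^2)^2 * ∑ l ∈ S, (a l)^2 := by
    have hκ1 : (1:ℝ) ≤ (κ:ℝ) := by exact_mod_cast hκ
    have hA : (0:ℝ) ≤ ∑ l ∈ S, (a l)^2 := Finset.sum_nonneg fun l _ => sq_nonneg _
    calc ∑ l ∈ S, ((1 / (deg w k + δ) + 1 / (deg w l + δ))
        - (1 / (deg w' k + δ) + 1 / (deg w' l + δ))) ^ 2
        ≤ ((κ:ℝ) * s^2 + 2*s*s + ∑ l ∈ S, (a l)^2) / (δ^2)^2 := hsum.trans (le_of_eq hexp)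
      _ ≤ (((κ:ℝ)+1)^2 * ∑ l ∈ S, (a l)^2) / (δ^2)^2 := by
          gcongr ?_ / _
          nlinarith [hCS, hA, hκ1, hs0]
      _ = (((κ:ℝ)+1)/δ^2)^2 * ∑ l ∈ S, (a l)^2 := by
          rw [div_pow]
          ring
  have h2 : Real.sqrt (∑ l ∈ S,
      ((1 / (deg w k + δ) + 1 / (deg w l + δ))
        - (1 / (deg w' k + δ) + 1 / (deg w' l + δ))) ^ 2)
      ≤ Real.sqrt ((((κ:ℝ)+1)/δ^2)^2 * ∑ l ∈ S, (a l)^2) := Real.sqrt_le_sqrt hfinal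
  rw [Real.sqrt_mul (by positivity), Real.sqrt_sq (by positivity)] at h2
  exact h2
end
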